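/- Let G be a finite abelian group of odd order n. Then ∑_{(j,k)∈G², j≠k} x_{j+k}²·det(M_G(j,k|j,k)) = ∑_{(i,j,k)∈G³ pairwise distinct} x_{2i}·x_{j+k}²·det(M_G(i,j,k|i,j,k)) in ℤ[x_g : g ∈ G]; equivalently (halving both ordered sums), T_2(M_G) = T_{12}(M_G). -/

import Mathlib

open MvPolynomial

/-- The principal minor `det A(S|S)` of `A` obtained by deleting the rows and the
columns indexed by `S`. -/
def pminor {ι : Type*} [Fintype ι] [DecidableEq ι] {R : Type*} [CommRing R]
    (A : Matrix ι ι R) (S : Finset ι) : R :=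
  Matrix.det (A.submatrix (fun x : {a : ι // a ∉ S} => (x : ι))
    (fun x : {a : ι // a ∉ S} => (x : ι)))

set_option linter.unusedSectionVars false

namespace Stmt16Aux

variable (G : Type*) [AddCommGroup G] [Fintype G] [DecidableEq G]


noncomputable def Mmat : Matrix G G (MvPolynomial G ℤ) := Matrix.of fun a b => X (a + b)
noncomputable def Cmat : Matrix G G (MvPolynomial G ℤ) := Matrix.of fun a b => X (a - b)
noncomputable def Pmat : Matrix G G (MvPolynomial G ℤ) :=
  Matrix.of fun a b => if a = -b then 1 else 0
noncomputable def DD : MvPolynomial G ℤ := (Mmat G).det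
noncomputable def zz : G → MvPolynomial G ℤ :=
  fun g => (Pmat G).det * (Cmat G).adjugate (-g) 0

lemma Pmat_mul_Pmat : Pmat G * Pmat G = 1 := by
  ext a b
  simp only [Pmat, Matrix.mul_apply, Matrix.of_apply]
  rw [Finset.sum_eq_single (-a)]
  · simp [eq_comm, Matrix.one_apply, neg_eq_iff_eq_neg]
  · intro t _ ht
    rw [if_neg (by rintro rfl; simp at ht), zero_mul]
  · simp

lemma Mmat_eq : Mmat G = Cmat G * Pmat G := by
  ext a b
  simp only [Mmat, Cmat, Pmat, Matrix.mul_apply, Matrix.of_apply]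
  rw [Finset.sum_eq_single (-b)]
  · simp [sub_neg_eq_add]
  · intro t _ ht
    rw [if_neg (by rintro rfl; simp at ht), mul_zero]
  · simp

lemma adj_Pmat : (Pmat G).adjugate = (Pmat G).det • Pmat G := by
  have h := Matrix.adjugate_mul (Pmat G)
  calc (Pmat G).adjugate = (Pmat G).adjugate * (Pmat G * Pmat G) := by
        rw [Pmat_mul_Pmat, mul_one]
    _ = ((Pmat G).adjugate * Pmat G) * Pmat G := by rw [mul_assoc]
    _ = ((Pmat G).det • 1) * Pmat G := by rw [h]
    _ = (Pmat G).det • Pmat G := by rw [smul_mul_assoc, one_mul]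

lemma adj_Cmat_shift (g a b : G) :
    (Cmat G).adjugate (a + g) (b + g) = (Cmat G).adjugate a b := by
  have he : (Cmat G).submatrix (Equiv.addRight g) (Equiv.addRight g) = Cmat G := by
    ext u v
    simp [Cmat, Matrix.submatrix_apply, Equiv.addRight]
  have h := Matrix.adjugate_submatrix_equiv_self (Equiv.addRight g) (Cmat G)
  rw [he] at h
  have := congrFun (congrFun h a) b
  simpa [Matrix.submatrix_apply, Equiv.addRight] using this.symm

lemma adj_Mmat (a b : G) : (Mmat G).adjugate a b = zz G (a + b) := by
  have hd : (Mmat G).adjugate = (Pmat G).adjugate * (Cmat G).adjugate := by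
    rw [Mmat_eq G, Matrix.adjugate_mul_distrib]
  have h1 : (Mmat G).adjugate a b = (Pmat G).det * (Cmat G).adjugate (-a) b := by
    rw [hd, adj_Pmat]
    simp only [Matrix.mul_apply, Matrix.smul_apply, Pmat, Matrix.of_apply, smul_eq_mul]
    rw [Finset.sum_eq_single (-a)]
    · simp [mul_assoc]
    · intro t _ ht
      rw [if_neg (by rintro rfl; simp at ht)]; ring
    · simp
  have h2 : (Cmat G).adjugate (-a) b = (Cmat G).adjugate (-(a+b)) 0 := by
    have h3 := adj_Cmat_shift G b (-(a+b)) 0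
    rw [zero_add, show -(a+b)+b = -a by abel] at h3
    exact h3
  rw [h1, h2, zz]

lemma conv1 (h : G) :
    (∑ t : G, X t * zz G (t + h)) = if h = 0 then DD G else 0 := by
  have hm := Matrix.adjugate_mul (Mmat G)
  have := congrFun (congrFun hm h) 0
  simp only [Matrix.mul_apply, Matrix.smul_apply, Matrix.one_apply, smul_eq_mul] at this
  rw [Fintype.sum_equiv (Equiv.refl G)
    (fun t => X t * zz G (t + h)) (fun b => (Mmat G).adjugate h b * Mmat G b 0)
    (by
      intro t
      show X t * zz G (t + h) = (Mmat G).adjugate h t * Mmat G t 0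
      rw [adj_Mmat, show Mmat G t 0 = X t by simp [Mmat], add_comm h t, mul_comm])]
  rw [this]
  simp [DD, mul_ite, mul_one, mul_zero]



lemma self_add_self_eq_zero (hodd : Odd (Fintype.card G)) {x : G} (hx : x + x = 0) :
    x = 0 := by
  have h2 : addOrderOf x ∣ 2 := addOrderOf_dvd_of_nsmul_eq_zero (by rw [two_nsmul]; exact hx)
  have hc : addOrderOf x ∣ Fintype.card G := addOrderOf_dvd_card
  rcases (Nat.dvd_prime Nat.prime_two).mp h2 with h | h
  · exact AddMonoid.addOrderOf_eq_one_iff.mp h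
  · rw [h] at hc
    exact absurd (even_iff_two_dvd.mpr hc) (Nat.not_even_iff_odd.mpr hodd)

lemma double_inj (hodd : Odd (Fintype.card G)) :
    Function.Injective (fun g : G => g + g) := by
  intro a b hab
  have : (a - b) + (a - b) = 0 := by
    simp only at hab
    rw [sub_add_sub_comm, hab, sub_self]
  have := self_add_self_eq_zero G hodd this
  exact sub_eq_zero.mp this

noncomputable def dbl (hodd : Odd (Fintype.card G)) : G ≃ G :=
  Equiv.ofBijective (fun g : G => g + g)
    ((Finite.injective_iff_bijective).mp (double_inj G hodd))



noncomputable def Bmat (S : Finset G) : Matrix G G (MvPolynomial G ℤ) :=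
  Matrix.of fun r c => if c ∈ S then (Mmat G).adjugate r c else if r = c then 1 else 0

noncomputable def Amat (S : Finset G) : Matrix G G (MvPolynomial G ℤ) :=
  Matrix.of fun r c => if c ∈ S then (DD G * if r = c then 1 else 0) else Mmat G r c

lemma mul_Bmat (S : Finset G) : Mmat G * Bmat G S = Amat G S := by
  ext r c
  simp only [Matrix.mul_apply, Bmat, Amat, Matrix.of_apply]
  by_cases hc : c ∈ S
  · simp only [hc, if_true]
    have h := congrFun (congrFun (Matrix.mul_adjugate (Mmat G)) r) c
    simp only [Matrix.mul_apply, Matrix.smul_apply, Matrix.one_apply, smul_eq_mul] at h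
    rw [h, DD]
  · simp only [hc, if_false]
    rw [Finset.sum_eq_single c]
    · simp
    · intro t _ ht; rw [if_neg ht, mul_zero]
    · simp

lemma det_Bmat (S : Finset G) :
    (Bmat G S).det =
      Matrix.det (Matrix.of fun p q : {a : G // a ∈ S} => zz G ((p : G) + (q : G))) := by
  rw [← Matrix.det_submatrix_equiv_self (Equiv.sumCompl (fun a => a ∈ S)) (Bmat G S)]
  have hb : (Bmat G S).submatrix (Equiv.sumCompl (fun a => a ∈ S))
        (Equiv.sumCompl (fun a => a ∈ S)) =
      Matrix.fromBlocks
        (Matrix.of fun p q : {a : G // a ∈ S} => zz G ((p : G) + (q : G))) 0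
        (Matrix.of fun (p : {a : G // ¬ a ∈ S}) (q : {a : G // a ∈ S}) =>
          (Mmat G).adjugate (p : G) (q : G)) 1 := by
    ext pq rs : 2
    rcases pq with p | p <;> rcases rs with q | q <;>
      simp only [Matrix.submatrix_apply, Equiv.sumCompl_apply_inl, Equiv.sumCompl_apply_inr,
        Matrix.fromBlocks_apply₁₁, Matrix.fromBlocks_apply₁₂, Matrix.fromBlocks_apply₂₁,
        Matrix.fromBlocks_apply₂₂, Bmat, Matrix.of_apply]
    · rw [if_pos q.2, adj_Mmat G]
    · rw [if_neg q.2, if_neg (fun h : (p : G) = (q : G) => q.2 (h ▸ p.2)), Matrix.zero_apply]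
    · rw [if_pos q.2]
    · rw [if_neg q.2]
      simp [Matrix.one_apply, Subtype.coe_inj]
  rw [hb, Matrix.det_fromBlocks_zero₁₂, Matrix.det_one, mul_one]

lemma det_Amat (S : Finset G) :
    (Amat G S).det = DD G ^ S.card * pminor (Mmat G) S := by
  rw [← Matrix.det_submatrix_equiv_self (Equiv.sumCompl (fun a => a ∈ S)) (Amat G S)]
  have ha : (Amat G S).submatrix (Equiv.sumCompl (fun a => a ∈ S))
        (Equiv.sumCompl (fun a => a ∈ S)) =
      Matrix.fromBlocks
        (DD G • (1 : Matrix {a : G // a ∈ S} {a : G // a ∈ S} (MvPolynomial G ℤ)))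
        (Matrix.of fun (p : {a : G // a ∈ S}) (q : {a : G // ¬ a ∈ S}) =>
          Mmat G (p : G) (q : G)) 0
        (Matrix.of fun (p q : {a : G // ¬ a ∈ S}) => Mmat G (p : G) (q : G)) := by
    ext pq rs : 2
    rcases pq with p | p <;> rcases rs with q | q <;>
      simp only [Matrix.submatrix_apply, Equiv.sumCompl_apply_inl, Equiv.sumCompl_apply_inr,
        Matrix.fromBlocks_apply₁₁, Matrix.fromBlocks_apply₁₂, Matrix.fromBlocks_apply₂₁,
        Matrix.fromBlocks_apply₂₂, Amat, Matrix.of_apply]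
    · rw [if_pos q.2]
      simp [Matrix.smul_apply, Matrix.one_apply, Subtype.coe_inj]
    · rw [if_neg q.2]
    · rw [if_pos q.2, if_neg (fun h : (p : G) = (q : G) => p.2 (h ▸ q.2)),
        Matrix.zero_apply, mul_zero]
    · rw [if_neg q.2]
  rw [ha, Matrix.det_fromBlocks_zero₂₁, Matrix.det_smul, Matrix.det_one, mul_one,
    Fintype.card_coe]
  rfl

lemma jac (S : Finset G) :
    DD G ^ S.card * pminor (Mmat G) S =
      DD G * Matrix.det (Matrix.of fun p q : {a : G // a ∈ S} => zz G ((p : G) + (q : G))) := by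
  rw [← det_Amat, ← mul_Bmat, Matrix.det_mul, det_Bmat, DD]


noncomputable def m2 (j k : G) : MvPolynomial G ℤ :=
  zz G (j + j) * zz G (k + k) - zz G (j + k) * zz G (j + k)

noncomputable def d3 (i j k : G) : MvPolynomial G ℤ :=
  zz G (i + i) * (zz G (j + j) * zz G (k + k) - zz G (j + k) * zz G (j + k))
    - zz G (i + j) * (zz G (i + j) * zz G (k + k) - zz G (j + k) * zz G (i + k))
    + zz G (i + k) * (zz G (i + j) * zz G (j + k) - zz G (j + j) * zz G (i + k))

def e2 {j k : G} (h : j ≠ k) : Fin 2 ≃ {a : G // a ∈ ({j, k} : Finset G)} where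
  toFun p := if p = 0 then ⟨j, by simp⟩ else ⟨k, by simp⟩
  invFun a := if (a : G) = j then 0 else 1
  left_inv p := by
    fin_cases p
    · simp
    · simp [Ne.symm h]
  right_inv a := by
    have ha := a.2
    simp only [Finset.mem_insert, Finset.mem_singleton] at ha
    rcases ha with ha | ha <;> simp [ha, Subtype.ext_iff, Ne.symm h]

lemma jac2 {j k : G} (h : j ≠ k) :
    DD G ^ 2 * pminor (Mmat G) {j, k} = DD G * m2 G j k := by
  have hcard : ({j, k} : Finset G).card = 2 := by
    rw [Finset.card_insert_of_notMem (by simp [h]), Finset.card_singleton]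
  have hj := jac G {j, k}
  rw [hcard] at hj
  rw [hj]
  congr 1
  rw [← Matrix.det_submatrix_equiv_self (e2 G h)
    (Matrix.of fun p q : {a : G // a ∈ ({j, k} : Finset G)} => zz G ((p : G) + (q : G)))]
  have h00 : ((e2 G h 0 : {a : G // a ∈ ({j, k} : Finset G)}) : G) = j := by simp [e2]
  have h11 : ((e2 G h 1 : {a : G // a ∈ ({j, k} : Finset G)}) : G) = k := by simp [e2]
  rw [Matrix.det_fin_two]
  simp only [Matrix.submatrix_apply, Matrix.of_apply, h00, h11]
  rw [m2, add_comm k j]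

def e3 {i j k : G} (hij : i ≠ j) (hik : i ≠ k) (hjk : j ≠ k) :
    Fin 3 ≃ {a : G // a ∈ ({i, j, k} : Finset G)} where
  toFun p := if p = 0 then ⟨i, by simp⟩ else if p = 1 then ⟨j, by simp⟩ else ⟨k, by simp⟩
  invFun a := if (a : G) = i then 0 else if (a : G) = j then 1 else 2
  left_inv p := by
    fin_cases p
    · simp
    · simp [Ne.symm hij]
    · simp [Ne.symm hik, Ne.symm hjk]
  right_inv a := by
    have ha := a.2
    simp only [Finset.mem_insert, Finset.mem_singleton] at ha
    rcases ha with ha | ha | ha <;>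
      simp [ha, Subtype.ext_iff, Ne.symm hij, Ne.symm hik, Ne.symm hjk]

lemma jac3 {i j k : G} (hij : i ≠ j) (hik : i ≠ k) (hjk : j ≠ k) :
    DD G ^ 3 * pminor (Mmat G) {i, j, k} = DD G * d3 G i j k := by
  have hcard : ({i, j, k} : Finset G).card = 3 := by
    rw [Finset.card_insert_of_notMem (by simp [hij, hik]),
      Finset.card_insert_of_notMem (by simp [hjk]), Finset.card_singleton]
  have hj := jac G {i, j, k}
  rw [hcard] at hj
  rw [hj]
  congr 1
  rw [← Matrix.det_submatrix_equiv_self (e3 G hij hik hjk)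
    (Matrix.of fun p q : {a : G // a ∈ ({i, j, k} : Finset G)} => zz G ((p : G) + (q : G)))]
  have h0 : ((e3 G hij hik hjk 0 : {a : G // a ∈ ({i, j, k} : Finset G)}) : G) = i := by simp [e3]
  have h1 : ((e3 G hij hik hjk 1 : {a : G // a ∈ ({i, j, k} : Finset G)}) : G) = j := by simp [e3]
  have h2 : ((e3 G hij hik hjk 2 : {a : G // a ∈ ({i, j, k} : Finset G)}) : G) = k := by simp [e3]
  rw [Matrix.det_fin_three]
  simp only [Matrix.submatrix_apply, Matrix.of_apply, h0, h1, h2]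
  rw [d3, add_comm j i, add_comm k i, add_comm k j]
  ring

lemma conv2 (h : G) :
    (∑ t : G, X (t + h) * zz G t) = if h = 0 then DD G else 0 := by
  rw [Fintype.sum_equiv (Equiv.addRight h) (fun t => X (t + h) * zz G t)
    (fun u => X u * zz G (u + -h)) (fun t => by
      simp only [Equiv.coe_addRight]
      rw [show t + h + -h = t by abel])]
  rw [conv1 G (-h)]
  simp [neg_eq_zero]

lemma convD (hodd : Odd (Fintype.card G)) (h : G) :
    (∑ i : G, X (i + i) * zz G (i + i + h)) = if h = 0 then DD G else 0 := by
  rw [Fintype.sum_equiv (dbl G hodd) (fun i => X (i + i) * zz G (i + i + h))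
    (fun t => X t * zz G (t + h)) (fun i => rfl)]
  exact conv1 G h

lemma claimA (hodd : Odd (Fintype.card G)) (j k : G) :
    (∑ i : G, X (i + i) * d3 G i j k)
      = DD G * m2 G j k
        - zz G (k + k) * (∑ i : G, X (i + i) * (zz G (i + j) * zz G (i + j)))
        - zz G (j + j) * (∑ i : G, X (i + i) * (zz G (i + k) * zz G (i + k)))
        + 2 * zz G (j + k) * (∑ i : G, X (i + i) * (zz G (i + j) * zz G (i + k))) := by
  have hD : (∑ i : G, X (i + i) * zz G (i + i)) = DD G := by
    have h0 := convD G hodd 0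
    simp only [add_zero, if_pos rfl] at h0
    exact h0
  rw [← hD]
  simp only [Finset.sum_mul, Finset.mul_sum, ← Finset.sum_sub_distrib,
    ← Finset.sum_add_distrib]
  apply Finset.sum_congr rfl
  intro i _
  simp only [d3, m2]
  ring

lemma expand3 (f : G × G × G → MvPolynomial G ℤ) :
    (∑ x : G × G × G, f x) = ∑ a : G, ∑ b : G, ∑ c : G, f (a, b, c) := by
  rw [Fintype.sum_prod_type]
  exact Finset.sum_congr rfl fun a _ => Fintype.sum_prod_type _

/-- The triple-sum contraction: `∑ X t² z t · X(u+w-t) · z u · z w = D · ∑ X a² z a²`. -/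
lemma keyBB :
    (∑ t : G, ∑ u : G, ∑ w : G,
        (X t * X t * zz G t * zz G u) * (X (u + w - t) * zz G w))
      = DD G * ∑ a : G, X a * X a * (zz G a * zz G a) := by
  have h1 : ∀ t u : G, (∑ w : G, X (u + w - t) * zz G w) = if u = t then DD G else 0 := by
    intro t u
    rw [Fintype.sum_equiv (Equiv.refl G) (fun w => X (u + w - t) * zz G w)
      (fun w => X (w + (u - t)) * zz G w)
      (fun w => by
        show X (u + w - t) * zz G w = X ((Equiv.refl G) w + (u - t)) * zz G ((Equiv.refl G) w)
        rw [Equiv.refl_apply, show u + w - t = w + (u - t) by abel])]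
    rw [conv2 G (u - t)]
    simp [sub_eq_zero]
  have h2 : ∀ t : G,
      (∑ u : G, ∑ w : G, (X t * X t * zz G t * zz G u) * (X (u + w - t) * zz G w))
        = X t * X t * (zz G t * zz G t) * DD G := by
    intro t
    have : ∀ u : G, (∑ w : G, (X t * X t * zz G t * zz G u) * (X (u + w - t) * zz G w))
        = (X t * X t * zz G t * zz G u) * (if u = t then DD G else 0) := by
      intro u
      rw [← h1 t u, Finset.mul_sum]
    simp only [this, mul_ite, mul_zero]
    rw [Finset.sum_ite_eq' Finset.univ t
      (fun u => X t * X t * zz G t * zz G u * DD G)]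
    simp only [Finset.mem_univ, if_pos]
    ring
  simp only [h2]
  rw [Finset.mul_sum]
  apply Finset.sum_congr rfl
  intro a _
  ring

/-- similar contraction for the `AA` side. -/
lemma keyAA (hodd : Odd (Fintype.card G)) :
    (∑ a : G, ∑ b : G, ∑ c : G,
        (X c * X c * (zz G a * zz G a)) * (X (a + a - (c + c) + b) * zz G b))
      = DD G * ∑ a : G, X a * X a * (zz G a * zz G a) := by
  have h1 : ∀ a c : G, (∑ b : G, X (a + a - (c + c) + b) * zz G b)
      = if a = c then DD G else 0 := by
    intro a c
    rw [Fintype.sum_equiv (Equiv.refl G) (fun b => X (a + a - (c + c) + b) * zz G b)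
      (fun b => X (b + (a + a - (c + c))) * zz G b)
      (fun b => by
        show X (a + a - (c + c) + b) * zz G b
            = X ((Equiv.refl G) b + (a + a - (c + c))) * zz G ((Equiv.refl G) b)
        rw [Equiv.refl_apply, show a + a - (c + c) + b = b + (a + a - (c + c)) by abel])]
    rw [conv2 G (a + a - (c + c))]
    have : (a + a - (c + c) = 0) ↔ (a = c) := by
      rw [sub_eq_zero]
      constructor
      · intro hh
        exact double_inj G hodd hh
      · intro hh; rw [hh]
    simp [this]
  have h2 : ∀ a : G,
      (∑ b : G, ∑ c : G, (X c * X c * (zz G a * zz G a)) * (X (a + a - (c + c) + b) * zz G b))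
        = X a * X a * (zz G a * zz G a) * DD G := by
    intro a
    rw [Finset.sum_comm]
    have : ∀ c : G,
        (∑ b : G, (X c * X c * (zz G a * zz G a)) * (X (a + a - (c + c) + b) * zz G b))
          = (X c * X c * (zz G a * zz G a)) * (if a = c then DD G else 0) := by
      intro c
      rw [← h1 a c, Finset.mul_sum]
    simp only [this, mul_ite, mul_zero]
    rw [Finset.sum_ite_eq Finset.univ a
      (fun c => X c * X c * (zz G a * zz G a) * DD G)]
    simp only [Finset.mem_univ, if_pos]
  simp only [h2]
  rw [Finset.mul_sum]
  apply Finset.sum_congr rfl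
  intro a _
  ring

noncomputable def eBB (hodd : Odd (Fintype.card G)) : G × G × G ≃ G × G × G where
  toFun x := (x.2.1 + x.2.2, x.1 + x.2.1, x.1 + x.2.2)
  invFun y := ((dbl G hodd).symm (y.2.1 + y.2.2 - y.1),
    y.2.1 - (dbl G hodd).symm (y.2.1 + y.2.2 - y.1),
    y.2.2 - (dbl G hodd).symm (y.2.1 + y.2.2 - y.1))
  left_inv := by
    rintro ⟨i, j, k⟩
    have hi : (dbl G hodd).symm ((i + j) + (i + k) - (j + k)) = i := by
      rw [show (i + j) + (i + k) - (j + k) = i + i by abel]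
      exact (dbl G hodd).symm_apply_apply i
    simp only [hi]
    refine Prod.ext ?_ (Prod.ext ?_ ?_) <;> simp <;> abel
  right_inv := by
    rintro ⟨t, u, w⟩
    have hd : (dbl G hodd).symm (u + w - t) + (dbl G hodd).symm (u + w - t) = u + w - t :=
      (dbl G hodd).apply_symm_apply (u + w - t)
    set i := (dbl G hodd).symm (u + w - t) with hiw
    refine Prod.ext ?_ (Prod.ext ?_ ?_) <;> simp only []
    · rw [show u - i + (w - i) = u + w - (i + i) by abel, hd]; abel
    · abel
    · abel

noncomputable def eAA (hodd : Odd (Fintype.card G)) : G × G × G ≃ G × G × G where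
  toFun x := (x.1 + x.2.1, x.2.2 + x.2.2, x.2.1 + x.2.2)
  invFun y := (y.1 - (y.2.2 - (dbl G hodd).symm y.2.1),
    y.2.2 - (dbl G hodd).symm y.2.1, (dbl G hodd).symm y.2.1)
  left_inv := by
    rintro ⟨i, j, k⟩
    have hk : (dbl G hodd).symm (k + k) = k := (dbl G hodd).symm_apply_apply k
    simp only [hk]
    refine Prod.ext ?_ (Prod.ext ?_ ?_) <;> simp <;> abel
  right_inv := by
    rintro ⟨a, b, c⟩
    have hd : (dbl G hodd).symm b + (dbl G hodd).symm b = b :=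
      (dbl G hodd).apply_symm_apply b
    set k := (dbl G hodd).symm b with hkw
    refine Prod.ext ?_ (Prod.ext ?_ ?_) <;> simp only []
    · abel
    · exact hd
    · abel

lemma BBval (hodd : Odd (Fintype.card G)) :
    (∑ j : G, ∑ k : G, (X (j + k) * X (j + k) * zz G (j + k)) *
        (∑ i : G, X (i + i) * (zz G (i + j) * zz G (i + k))))
      = DD G * ∑ a : G, X a * X a * (zz G a * zz G a) := by
  have step1 : (∑ j : G, ∑ k : G, (X (j + k) * X (j + k) * zz G (j + k)) *
        (∑ i : G, X (i + i) * (zz G (i + j) * zz G (i + k))))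
      = ∑ i : G, ∑ j : G, ∑ k : G,
          (X (j + k) * X (j + k) * zz G (j + k)) * (X (i + i) * (zz G (i + j) * zz G (i + k))) := by
    rw [show (∑ j : G, ∑ k : G, (X (j + k) * X (j + k) * zz G (j + k)) *
        (∑ i : G, X (i + i) * (zz G (i + j) * zz G (i + k))))
      = ∑ j : G, ∑ k : G, ∑ i : G,
          (X (j + k) * X (j + k) * zz G (j + k)) * (X (i + i) * (zz G (i + j) * zz G (i + k)))
      from Finset.sum_congr rfl fun j _ => Finset.sum_congr rfl fun k _ => Finset.mul_sum _ _ _]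
    rw [show (∑ j : G, ∑ k : G, ∑ i : G,
          (X (j + k) * X (j + k) * zz G (j + k)) * (X (i + i) * (zz G (i + j) * zz G (i + k))))
      = ∑ j : G, ∑ i : G, ∑ k : G,
          (X (j + k) * X (j + k) * zz G (j + k)) * (X (i + i) * (zz G (i + j) * zz G (i + k)))
      from Finset.sum_congr rfl fun j _ => Finset.sum_comm]
    exact Finset.sum_comm
  rw [step1]
  have hT := (expand3 G (fun x : G × G × G =>
    (X (x.2.1 + x.2.2) * X (x.2.1 + x.2.2) * zz G (x.2.1 + x.2.2)) *
      (X (x.1 + x.1) * (zz G (x.1 + x.2.1) * zz G (x.1 + x.2.2))))).symm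
  have hK := expand3 G (fun y : G × G × G =>
    (X y.1 * X y.1 * zz G y.1 * zz G y.2.1) * (X (y.2.1 + y.2.2 - y.1) * zz G y.2.2))
  have heq := Fintype.sum_equiv (eBB G hodd)
    (fun x : G × G × G =>
      (X (x.2.1 + x.2.2) * X (x.2.1 + x.2.2) * zz G (x.2.1 + x.2.2)) *
        (X (x.1 + x.1) * (zz G (x.1 + x.2.1) * zz G (x.1 + x.2.2))))
    (fun y : G × G × G =>
      (X y.1 * X y.1 * zz G y.1 * zz G y.2.1) * (X (y.2.1 + y.2.2 - y.1) * zz G y.2.2))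
    (by
      rintro ⟨i, j, k⟩
      show (X (j + k) * X (j + k) * zz G (j + k)) * (X (i + i) * (zz G (i + j) * zz G (i + k)))
        = (X (j + k) * X (j + k) * zz G (j + k) * zz G (i + j)) *
            (X ((i + j) + (i + k) - (j + k)) * zz G (i + k))
      rw [show (i + j) + (i + k) - (j + k) = i + i by abel]
      ring)
  exact hT.trans (heq.trans (hK.trans (keyBB G)))

lemma AAval (hodd : Odd (Fintype.card G)) :
    (∑ j : G, ∑ k : G, (X (j + k) * X (j + k) * zz G (k + k)) *
        (∑ i : G, X (i + i) * (zz G (i + j) * zz G (i + j))))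
      = DD G * ∑ a : G, X a * X a * (zz G a * zz G a) := by
  have step1 : (∑ j : G, ∑ k : G, (X (j + k) * X (j + k) * zz G (k + k)) *
        (∑ i : G, X (i + i) * (zz G (i + j) * zz G (i + j))))
      = ∑ i : G, ∑ j : G, ∑ k : G,
          (X (j + k) * X (j + k) * zz G (k + k)) * (X (i + i) * (zz G (i + j) * zz G (i + j))) := by
    rw [show (∑ j : G, ∑ k : G, (X (j + k) * X (j + k) * zz G (k + k)) *
        (∑ i : G, X (i + i) * (zz G (i + j) * zz G (i + j))))
      = ∑ j : G, ∑ k : G, ∑ i : G,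
          (X (j + k) * X (j + k) * zz G (k + k)) * (X (i + i) * (zz G (i + j) * zz G (i + j)))
      from Finset.sum_congr rfl fun j _ => Finset.sum_congr rfl fun k _ => Finset.mul_sum _ _ _]
    rw [show (∑ j : G, ∑ k : G, ∑ i : G,
          (X (j + k) * X (j + k) * zz G (k + k)) * (X (i + i) * (zz G (i + j) * zz G (i + j))))
      = ∑ j : G, ∑ i : G, ∑ k : G,
          (X (j + k) * X (j + k) * zz G (k + k)) * (X (i + i) * (zz G (i + j) * zz G (i + j)))
      from Finset.sum_congr rfl fun j _ => Finset.sum_comm]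
    exact Finset.sum_comm
  rw [step1]
  have hT := (expand3 G (fun x : G × G × G =>
    (X (x.2.1 + x.2.2) * X (x.2.1 + x.2.2) * zz G (x.2.2 + x.2.2)) *
      (X (x.1 + x.1) * (zz G (x.1 + x.2.1) * zz G (x.1 + x.2.1))))).symm
  have hK := expand3 G (fun y : G × G × G =>
    (X y.2.2 * X y.2.2 * (zz G y.1 * zz G y.1)) *
      (X (y.1 + y.1 - (y.2.2 + y.2.2) + y.2.1) * zz G y.2.1))
  have heq := Fintype.sum_equiv (eAA G hodd)
    (fun x : G × G × G =>
      (X (x.2.1 + x.2.2) * X (x.2.1 + x.2.2) * zz G (x.2.2 + x.2.2)) *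
        (X (x.1 + x.1) * (zz G (x.1 + x.2.1) * zz G (x.1 + x.2.1))))
    (fun y : G × G × G =>
      (X y.2.2 * X y.2.2 * (zz G y.1 * zz G y.1)) *
        (X (y.1 + y.1 - (y.2.2 + y.2.2) + y.2.1) * zz G y.2.1))
    (by
      rintro ⟨i, j, k⟩
      show (X (j + k) * X (j + k) * zz G (k + k)) * (X (i + i) * (zz G (i + j) * zz G (i + j)))
        = (X (j + k) * X (j + k) * (zz G (i + j) * zz G (i + j))) *
            (X ((i + j) + (i + j) - ((j + k) + (j + k)) + (k + k)) * zz G (k + k))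
      rw [show (i + j) + (i + j) - ((j + k) + (j + k)) + (k + k) = i + i by abel]
      ring)
  exact hT.trans (heq.trans (hK.trans (keyAA G hodd)))

lemma AA2val (hodd : Odd (Fintype.card G)) :
    (∑ j : G, ∑ k : G, (X (j + k) * X (j + k) * zz G (j + j)) *
        (∑ i : G, X (i + i) * (zz G (i + k) * zz G (i + k))))
      = DD G * ∑ a : G, X a * X a * (zz G a * zz G a) := by
  rw [Finset.sum_comm]
  rw [show (∑ k : G, ∑ j : G, (X (j + k) * X (j + k) * zz G (j + j)) *
        (∑ i : G, X (i + i) * (zz G (i + k) * zz G (i + k))))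
      = ∑ k : G, ∑ j : G, (X (k + j) * X (k + j) * zz G (j + j)) *
        (∑ i : G, X (i + i) * (zz G (i + k) * zz G (i + k))) from
    Finset.sum_congr rfl fun k _ => Finset.sum_congr rfl fun j _ => by rw [add_comm j k]]
  exact AAval G hodd

lemma claimB (hodd : Odd (Fintype.card G)) :
    (∑ j : G, ∑ k : G, (X (j + k) * X (j + k)) *
        (zz G (k + k) * (∑ i : G, X (i + i) * (zz G (i + j) * zz G (i + j)))
          + zz G (j + j) * (∑ i : G, X (i + i) * (zz G (i + k) * zz G (i + k)))
          - 2 * zz G (j + k) * (∑ i : G, X (i + i) * (zz G (i + j) * zz G (i + k))))) = 0 := by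
  have hper : ∀ j k : G, (X (j + k) * X (j + k)) *
        (zz G (k + k) * (∑ i : G, X (i + i) * (zz G (i + j) * zz G (i + j)))
          + zz G (j + j) * (∑ i : G, X (i + i) * (zz G (i + k) * zz G (i + k)))
          - 2 * zz G (j + k) * (∑ i : G, X (i + i) * (zz G (i + j) * zz G (i + k))))
      = ((X (j + k) * X (j + k) * zz G (k + k)) *
            (∑ i : G, X (i + i) * (zz G (i + j) * zz G (i + j)))
          + (X (j + k) * X (j + k) * zz G (j + j)) *
            (∑ i : G, X (i + i) * (zz G (i + k) * zz G (i + k))))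
        - ((X (j + k) * X (j + k) * zz G (j + k)) *
            (∑ i : G, X (i + i) * (zz G (i + j) * zz G (i + k)))
          + (X (j + k) * X (j + k) * zz G (j + k)) *
            (∑ i : G, X (i + i) * (zz G (i + j) * zz G (i + k)))) := by
    intro j k; ring
  simp only [hper]
  simp only [Finset.sum_sub_distrib, Finset.sum_add_distrib]
  rw [AAval G hodd, AA2val G hodd, BBval G hodd]
  ring

lemma m2_diag (j : G) : m2 G j j = 0 := by simp only [m2]; ring

lemma d3_eq12 (i k : G) : d3 G i i k = 0 := by simp only [d3]; ring

lemma d3_eq13 (i j : G) : d3 G i j i = 0 := by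
  simp only [d3]
  rw [add_comm j i]
  ring

lemma d3_eq23 (i j : G) : d3 G i j j = 0 := by simp only [d3]; ring

lemma DD_ne_zero : DD G ≠ 0 := by
  intro h0
  have hmap := RingHom.map_det (eval (fun g : G => if g = (0 : G) then (1 : ℤ) else 0)) (Mmat G)
  have hM : (eval (fun g : G => if g = (0 : G) then (1 : ℤ) else 0)).mapMatrix (Mmat G)
      = Equiv.Perm.permMatrix ℤ (Equiv.neg G) := by
    ext a b
    simp only [RingHom.mapMatrix_apply, Matrix.map_apply, Mmat, Matrix.of_apply, eval_X]
    rw [Equiv.Perm.permMatrix, PEquiv.toMatrix_toPEquiv_eq, Matrix.submatrix_apply, Matrix.one_apply]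
    simp only [Equiv.neg_apply]
    by_cases h : a + b = 0
    · rw [if_pos h, if_pos (by rw [neg_eq_iff_add_eq_zero]; exact h)]
    · rw [if_neg h, if_neg (by rw [neg_eq_iff_add_eq_zero]; exact h)]
  rw [hM, Matrix.det_permutation] at hmap
  rw [show DD G = (Mmat G).det from rfl] at h0
  rw [h0, map_zero] at hmap
  rcases Int.units_eq_one_or (Equiv.Perm.sign (Equiv.neg G)) with h | h <;>
    rw [h] at hmap <;> simp at hmap

lemma sumL (hodd : Odd (Fintype.card G)) :
    (DD G) ^ 3 * (∑ p ∈ Finset.univ.filter (fun p : G × G => p.1 ≠ p.2),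
        (X (p.1 + p.2) : MvPolynomial G ℤ) ^ 2 * pminor (Mmat G) {p.1, p.2})
      = ∑ j : G, ∑ k : G, DD G * DD G * ((X (j + k) * X (j + k)) * m2 G j k) := by
  rw [Finset.mul_sum, Finset.sum_filter, Fintype.sum_prod_type]
  apply Finset.sum_congr rfl
  intro j _
  apply Finset.sum_congr rfl
  intro k _
  show (if j ≠ k then DD G ^ 3 * (X (j + k) ^ 2 * pminor (Mmat G) {j, k}) else 0)
    = DD G * DD G * ((X (j + k) * X (j + k)) * m2 G j k)
  by_cases h : j = k
  · subst h
    rw [if_neg (by simp), m2_diag]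
    ring
  · rw [if_pos h]
    have hj : DD G ^ 2 * pminor (Mmat G) {j, k} = DD G * m2 G j k := jac2 G h
    calc DD G ^ 3 * (X (j + k) ^ 2 * pminor (Mmat G) {j, k})
        = X (j + k) ^ 2 * DD G * (DD G ^ 2 * pminor (Mmat G) {j, k}) := by ring
      _ = X (j + k) ^ 2 * DD G * (DD G * m2 G j k) := by rw [hj]
      _ = DD G * DD G * ((X (j + k) * X (j + k)) * m2 G j k) := by ring

lemma sumR (hodd : Odd (Fintype.card G)) :
    (DD G) ^ 3 * (∑ t ∈ Finset.univ.filter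
          (fun t : G × G × G => t.1 ≠ t.2.1 ∧ t.1 ≠ t.2.2 ∧ t.2.1 ≠ t.2.2),
        (X (t.1 + t.1) : MvPolynomial G ℤ) * (X (t.2.1 + t.2.2) : MvPolynomial G ℤ) ^ 2 *
          pminor (Mmat G) {t.1, t.2.1, t.2.2})
      = ∑ j : G, ∑ k : G, DD G * DD G * ((X (j + k) * X (j + k)) * m2 G j k) := by
  rw [Finset.mul_sum, Finset.sum_filter]
  rw [expand3 G (fun t : G × G × G =>
    if t.1 ≠ t.2.1 ∧ t.1 ≠ t.2.2 ∧ t.2.1 ≠ t.2.2 then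
      DD G ^ 3 * (X (t.1 + t.1) * X (t.2.1 + t.2.2) ^ 2 * pminor (Mmat G) {t.1, t.2.1, t.2.2})
    else 0)]
  have stepR1 : (∑ a : G, ∑ b : G, ∑ c : G,
        (if a ≠ b ∧ a ≠ c ∧ b ≠ c then
          DD G ^ 3 * (X (a + a) * X (b + c) ^ 2 * pminor (Mmat G) {a, b, c}) else 0))
      = ∑ a : G, ∑ b : G, ∑ c : G,
          DD G * ((X (b + c) * X (b + c)) * (X (a + a) * d3 G a b c)) := by
    apply Finset.sum_congr rfl; intro a _
    apply Finset.sum_congr rfl; intro b _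
    apply Finset.sum_congr rfl; intro c _
    by_cases h1 : a = b
    · subst h1
      rw [if_neg (by simp), d3_eq12]
      ring
    · by_cases h2 : a = c
      · subst h2
        rw [if_neg (by simp), d3_eq13]
        ring
      · by_cases h3 : b = c
        · subst h3
          rw [if_neg (by simp), d3_eq23]
          ring
        · rw [if_pos ⟨h1, h2, h3⟩]
          have hj : DD G ^ 3 * pminor (Mmat G) {a, b, c} = DD G * d3 G a b c :=
            jac3 G h1 h2 h3
          calc DD G ^ 3 * (X (a + a) * X (b + c) ^ 2 * pminor (Mmat G) {a, b, c})
              = X (a + a) * X (b + c) ^ 2 * (DD G ^ 3 * pminor (Mmat G) {a, b, c}) := by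
                ring
            _ = X (a + a) * X (b + c) ^ 2 * (DD G * d3 G a b c) := by rw [hj]
            _ = DD G * ((X (b + c) * X (b + c)) * (X (a + a) * d3 G a b c)) := by ring
  refine stepR1.trans ?_
  have stepComm : (∑ a : G, ∑ b : G, ∑ c : G,
        DD G * ((X (b + c) * X (b + c)) * (X (a + a) * d3 G a b c)))
      = ∑ b : G, ∑ c : G, ∑ a : G,
          DD G * ((X (b + c) * X (b + c)) * (X (a + a) * d3 G a b c)) := by
    rw [show (∑ a : G, ∑ b : G, ∑ c : G,
        DD G * ((X (b + c) * X (b + c)) * (X (a + a) * d3 G a b c)))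
      = ∑ b : G, ∑ a : G, ∑ c : G,
          DD G * ((X (b + c) * X (b + c)) * (X (a + a) * d3 G a b c)) from Finset.sum_comm]
    exact Finset.sum_congr rfl fun b _ => Finset.sum_comm
  rw [stepComm]
  have stepR2 : (∑ b : G, ∑ c : G, ∑ a : G,
        DD G * ((X (b + c) * X (b + c)) * (X (a + a) * d3 G a b c)))
      = ∑ b : G, ∑ c : G,
          DD G * ((X (b + c) * X (b + c)) * (∑ a : G, X (a + a) * d3 G a b c)) := by
    apply Finset.sum_congr rfl; intro b _
    apply Finset.sum_congr rfl; intro c _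
    rw [Finset.mul_sum, Finset.mul_sum]
  rw [stepR2]
  have stepR3 : (∑ b : G, ∑ c : G,
        DD G * ((X (b + c) * X (b + c)) * (∑ a : G, X (a + a) * d3 G a b c)))
      = ∑ b : G, ∑ c : G,
          (DD G * DD G * ((X (b + c) * X (b + c)) * m2 G b c)
            - DD G * ((X (b + c) * X (b + c)) *
              (zz G (c + c) * (∑ i : G, X (i + i) * (zz G (i + b) * zz G (i + b)))
                + zz G (b + b) * (∑ i : G, X (i + i) * (zz G (i + c) * zz G (i + c)))
                - 2 * zz G (b + c) * (∑ i : G, X (i + i) * (zz G (i + b) * zz G (i + c)))))) := by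
    apply Finset.sum_congr rfl; intro b _
    apply Finset.sum_congr rfl; intro c _
    rw [claimA G hodd b c]
    ring
  rw [stepR3]
  simp only [Finset.sum_sub_distrib]
  have stepR4 : (∑ b : G, ∑ c : G,
        DD G * ((X (b + c) * X (b + c)) *
          (zz G (c + c) * (∑ i : G, X (i + i) * (zz G (i + b) * zz G (i + b)))
            + zz G (b + b) * (∑ i : G, X (i + i) * (zz G (i + c) * zz G (i + c)))
            - 2 * zz G (b + c) * (∑ i : G, X (i + i) * (zz G (i + b) * zz G (i + c))))))
      = 0 := by
    rw [show (∑ b : G, ∑ c : G,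
        DD G * ((X (b + c) * X (b + c)) *
          (zz G (c + c) * (∑ i : G, X (i + i) * (zz G (i + b) * zz G (i + b)))
            + zz G (b + b) * (∑ i : G, X (i + i) * (zz G (i + c) * zz G (i + c)))
            - 2 * zz G (b + c) * (∑ i : G, X (i + i) * (zz G (i + b) * zz G (i + c))))))
      = DD G * ∑ b : G, ∑ c : G,
          ((X (b + c) * X (b + c)) *
            (zz G (c + c) * (∑ i : G, X (i + i) * (zz G (i + b) * zz G (i + b)))
              + zz G (b + b) * (∑ i : G, X (i + i) * (zz G (i + c) * zz G (i + c)))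
              - 2 * zz G (b + c) * (∑ i : G, X (i + i) * (zz G (i + b) * zz G (i + c))))) from by
      rw [Finset.mul_sum]
      exact Finset.sum_congr rfl fun b _ => by rw [Finset.mul_sum]]
    rw [claimB G hodd, mul_zero]
  rw [stepR4, sub_zero]

end Stmt16Aux

open Stmt16Aux

/-- **`T₂(M_G) = T₁₂(M_G)` for odd order (ordered-sum form).** If `|G|` is odd, then
`∑_{j≠k} x_{j+k}² · det M_G(j,k|j,k)
  = ∑_{i,j,k pairwise distinct} x_{2i} · x_{j+k}² · det M_G(i,j,k|i,j,k)`. -/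
theorem stmt_16 {G : Type*} [AddCommGroup G] [Fintype G] [DecidableEq G]
    (hodd : Odd (Fintype.card G)) :
    (∑ p ∈ Finset.univ.filter (fun p : G × G => p.1 ≠ p.2),
        (X (p.1 + p.2) : MvPolynomial G ℤ) ^ 2 *
          pminor (Matrix.of fun a b : G => (X (a + b) : MvPolynomial G ℤ)) {p.1, p.2}) =
      ∑ t ∈ Finset.univ.filter
          (fun t : G × G × G => t.1 ≠ t.2.1 ∧ t.1 ≠ t.2.2 ∧ t.2.1 ≠ t.2.2),
        (X (t.1 + t.1) : MvPolynomial G ℤ) * (X (t.2.1 + t.2.2) : MvPolynomial G ℤ) ^ 2 *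
          pminor (Matrix.of fun a b : G => (X (a + b) : MvPolynomial G ℤ))
            {t.1, t.2.1, t.2.2} := by

  classical
  have hcan : (DD G) ^ 3 ≠ 0 := pow_ne_zero _ (DD_ne_zero G)
  apply mul_left_cancel₀ hcan
  exact (sumL G hodd).trans (sumR G hodd).symm
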